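/- arXiv:1105.5169 — 2 statements merged into one kernel-verified Lean document; each statement's English description precedes it below -/
import Mathlib

section
/- Let V be a complex vector space equipped with a 𝔤-module structure for a Lie algebra 𝔤 over ℂ, a ℂ-linear action of a group K∞, and a ℂ-linear action of a group H, such that the H-action commutes with the 𝔤-action and with the K∞-action (h·(X·v) = X·(h·v) and h·(κ·v) = κ·(h·v) for all h ∈ H, X ∈ 𝔤, κ ∈ K∞, v ∈ V). Let K be a subgroup of H such that for every h ∈ H the double coset KhK is a finite disjoint union of left cosets of K. Let Φ ∈ V be a nonzero vector such that: (i) Φ is fixed by every element of K; (ii) for every h ∈ H, writing KhK as a disjoint union of left cosets h₁K, …, h_nK, the vector Σ_{i=1}^n h_i·Φ is a scalar multiple of Φ; (iii) V equals the smallest subspace of V containing Φ that is stable under the actions of 𝔤, K∞ and H. Let M be the smallest subspace of V containing Φ that is stable under the actions of 𝔤 and K∞. Then every vector of V fixed by every element of K lies in M. -/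
/-- The double coset `KhK` of `h` with respect to a subgroup `K`. -/
def doubleCoset {H : Type*} [Group H] (K : Subgroup H) (h : H) : Set H :=
  {x : H | ∃ k₁ ∈ K, ∃ k₂ ∈ K, x = k₁ * h * k₂}

/-- The left translate `aS` of a set `S` by a group element `a`. -/
def leftTranslate {H : Type*} [Group H] (a : H) (S : Set H) : Set H :=
  {x : H | ∃ s ∈ S, x = a * s}

/-- Let `V` be a complex vector space with a `𝔤`-module structure (`𝔤` a complex Lie
algebra), a ℂ-linear action of a group `K∞` and a ℂ-linear action of a group `H` commuting
with both.  Let `K ≤ H` be a subgroup such that every double coset `KhK` is a finite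
disjoint union of left cosets of `K`.  Let `Φ ≠ 0` be such that: (i) `Φ` is `K`-fixed;
(ii) `Φ` is a Hecke eigenvector: for every `h` and disjoint decomposition `KhK = ⊔ hᵢK`,
`∑ᵢ hᵢ·Φ` is a multiple of `Φ`; (iii) `V` is the smallest subspace containing `Φ` stable
under `𝔤`, `K∞` and `H`.  Let `M` be the smallest subspace containing `Φ` stable under `𝔤`
and `K∞`.  Then every `K`-fixed vector of `V` lies in `M`. -/
theorem stmt_9 {𝔤 V Kinf H : Type*} [LieRing 𝔤] [LieAlgebra ℂ 𝔤]
    [AddCommGroup V] [Module ℂ V] [LieRingModule 𝔤 V] [LieModule ℂ 𝔤 V]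
    [Group Kinf] [Group H]
    (ρ : Kinf →* (V ≃ₗ[ℂ] V)) (σ : H →* (V ≃ₗ[ℂ] V))
    -- the `H`-action commutes with the `𝔤`-action and the `K∞`-action:
    (hcomm𝔤 : ∀ (h : H) (X : 𝔤) (v : V), σ h ⁅X, v⁆ = ⁅X, σ h v⁆)
    (hcommK : ∀ (h : H) (κ : Kinf) (v : V), σ h (ρ κ v) = ρ κ (σ h v))
    (K : Subgroup H)
    (hdec : ∀ h : H, ∃ (n : ℕ) (r : Fin n → H),
      doubleCoset K h = ⋃ i, leftTranslate (r i) (K : Set H) ∧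
      ∀ i j, i ≠ j →
        Disjoint (leftTranslate (r i) (K : Set H)) (leftTranslate (r j) (K : Set H)))
    (Φ : V) (hΦ : Φ ≠ 0)
    -- (i) `Φ` is fixed by every element of `K`:
    (hfix : ∀ k ∈ K, σ k Φ = Φ)
    -- (ii) `Φ` is an eigenvector of all Hecke operators:
    (heigen : ∀ (h : H) (n : ℕ) (r : Fin n → H),
      doubleCoset K h = ⋃ i, leftTranslate (r i) (K : Set H) →
      (∀ i j, i ≠ j →
        Disjoint (leftTranslate (r i) (K : Set H)) (leftTranslate (r j) (K : Set H))) →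
      ∃ c : ℂ, ∑ i, σ (r i) Φ = c • Φ)
    -- (iii) `V` is generated by `Φ` under the actions of `𝔤`, `K∞` and `H`:
    (hgen : ∀ W : Submodule ℂ V, Φ ∈ W →
      (∀ X : 𝔤, ∀ v ∈ W, ⁅X, v⁆ ∈ W) → (∀ κ : Kinf, ∀ v ∈ W, ρ κ v ∈ W) →
      (∀ h : H, ∀ v ∈ W, σ h v ∈ W) → W = ⊤)
    -- `M` is the smallest subspace of `V` containing `Φ` stable under `𝔤` and `K∞`:
    (M : Submodule ℂ V) (hΦM : Φ ∈ M)
    (hM𝔤 : ∀ X : 𝔤, ∀ v ∈ M, ⁅X, v⁆ ∈ M)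
    (hMK : ∀ κ : Kinf, ∀ v ∈ M, ρ κ v ∈ M)
    (hMmin : ∀ W : Submodule ℂ V, Φ ∈ W →
      (∀ X : 𝔤, ∀ v ∈ W, ⁅X, v⁆ ∈ W) → (∀ κ : Kinf, ∀ v ∈ W, ρ κ v ∈ W) → M ≤ W) :
    ∀ v : V, (∀ k ∈ K, σ k v = v) → v ∈ M := by
  classical
  intro v hv
  have hσmul : ∀ (x y : H) (w : V), σ (x * y) w = σ x (σ y w) := by
    intro x y w; rw [map_mul]; rfl
  have hσfixr : ∀ (x s : H), s ∈ K → σ (x * s) Φ = σ x Φ := by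
    intro x s hs; rw [hσmul, hfix s hs]
  -- the monoid of operators generated by the 𝔤- and K∞-actions
  set adX : 𝔤 → Module.End ℂ V := fun X =>
    { toFun := fun w => ⁅X, w⁆
      map_add' := fun a b => lie_add X a b
      map_smul' := fun c a => lie_smul c X a } with hadX
  set S : Set (Module.End ℂ V) :=
    {e | (∃ X : 𝔤, e = adX X) ∨ ∃ κ : Kinf, e = (ρ κ : V →ₗ[ℂ] V)} with hS
  set A := Submonoid.closure S with hA
  have hAcomm : ∀ a ∈ A, ∀ (h : H) (w : V), σ h (a w) = a (σ h w) := by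
    intro a ha
    induction ha using Submonoid.closure_induction with
    | mem x hx =>
      rcases hx with ⟨X, rfl⟩ | ⟨κ, rfl⟩
      · intro h w; exact hcomm𝔤 h X w
      · intro h w; exact hcommK h κ w
    | one => intro h w; rfl
    | mul x y hx hy ihx ihy =>
      intro h w
      show σ h (x (y w)) = x (y (σ h w))
      rw [ihx, ihy]
  have hAM : ∀ a ∈ A, ∀ w ∈ M, a w ∈ M := by
    intro a ha
    induction ha using Submonoid.closure_induction with
    | mem x hx =>
      rcases hx with ⟨X, rfl⟩ | ⟨κ, rfl⟩
      · intro w hw; exact hM𝔤 X w hw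
      · intro w hw; exact hMK κ w hw
    | one => intro w hw; exact hw
    | mul x y hx hy ihx ihy =>
      intro w hw
      exact ihx _ (ihy _ hw)
  set gens : Set V := {w | ∃ (h : H), ∃ a ∈ A, w = a (σ h Φ)} with hgens_def
  set W := Submodule.span ℂ gens with hW
  have hΦW : Φ ∈ W := Submodule.subset_span ⟨1, 1, A.one_mem, by simp⟩
  have hWinv : ∀ (f : Module.End ℂ V), (∀ x ∈ gens, f x ∈ W) → ∀ w ∈ W, f w ∈ W := by
    intro f hf w hw
    induction hw using Submodule.span_induction with
    | mem x hx => exact hf x hx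
    | zero => simpa using W.zero_mem
    | add x y _ _ ihx ihy => simpa [map_add] using W.add_mem ihx ihy
    | smul c x _ ih => simpa [map_smul] using W.smul_mem c ih
  have hWtop : W = ⊤ := by
    apply hgen W hΦW
    · intro X w hw
      have hx : ∀ x ∈ gens, adX X x ∈ W := by
        rintro x ⟨h, a, ha, rfl⟩
        refine Submodule.subset_span ⟨h, adX X * a,
          A.mul_mem (Submonoid.subset_closure (Or.inl ⟨X, rfl⟩)) ha, rfl⟩
      exact hWinv (adX X) hx w hw
    · intro κ w hw
      have hx : ∀ x ∈ gens, (ρ κ : V →ₗ[ℂ] V) x ∈ W := by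
        rintro x ⟨h, a, ha, rfl⟩
        refine Submodule.subset_span ⟨h, (ρ κ : V →ₗ[ℂ] V) * a,
          A.mul_mem (Submonoid.subset_closure (Or.inr ⟨κ, rfl⟩)) ha, rfl⟩
      exact hWinv (ρ κ : V →ₗ[ℂ] V) hx w hw
    · intro h' w hw
      have hx : ∀ x ∈ gens, (σ h' : V →ₗ[ℂ] V) x ∈ W := by
        rintro x ⟨h, a, ha, rfl⟩
        refine Submodule.subset_span ⟨h' * h, a, ha, ?_⟩
        show σ h' (a (σ h Φ)) = a (σ (h' * h) Φ)
        rw [hAcomm a ha, hσmul]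
      exact hWinv (σ h' : V →ₗ[ℂ] V) hx w hw
  have hvW : v ∈ Submodule.span ℂ gens := by
    rw [← hW, hWtop]; trivial
  rw [Submodule.mem_span_set] at hvW
  obtain ⟨cf, hsupp, hsumv⟩ := hvW
  have hgens' : ∀ x, x ∈ cf.support → ∃ (h : H), ∃ a, a ∈ A ∧ x = a (σ h Φ) := by
    intro x hx
    obtain ⟨h, a, ha, e⟩ := hsupp hx
    exact ⟨h, a, ha, e⟩
  choose! hh aa haA hxa using hgens'
  choose nn r hrdec using fun x : V => hdec (hh x)
  have hrU : ∀ x : V, doubleCoset K (hh x) = ⋃ j, leftTranslate (r x j) (K : Set H) :=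
    fun x => (hrdec x).1
  have hrD : ∀ (x : V) i j, i ≠ j →
      Disjoint (leftTranslate (r x i) (K : Set H)) (leftTranslate (r x j) (K : Set H)) :=
    fun x => (hrdec x).2
  choose cc hcc using fun x : V => heigen (hh x) (nn x) (r x) (hrU x) (hrD x)
  -- basic double coset facts
  have hdcL : ∀ (k : H), k ∈ K → ∀ (x : V) (y : H),
      y ∈ doubleCoset K (hh x) → k * y ∈ doubleCoset K (hh x) := by
    rintro k hk x y ⟨k₁, hk₁, k₂, hk₂, rfl⟩
    exact ⟨k * k₁, K.mul_mem hk hk₁, k₂, hk₂, by group⟩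
  have hdcR : ∀ (s : H), s ∈ K → ∀ (x : V) (y : H),
      y ∈ doubleCoset K (hh x) → y * s ∈ doubleCoset K (hh x) := by
    rintro s hs x y ⟨k₁, hk₁, k₂, hk₂, rfl⟩
    exact ⟨k₁, hk₁, k₂ * s, K.mul_mem hk₂ hs, by group⟩
  have hrmem : ∀ (x : V) (j : Fin (nn x)), r x j ∈ doubleCoset K (hh x) := by
    intro x j
    rw [hrU x]
    exact Set.mem_iUnion.2 ⟨j, 1, K.one_mem, (mul_one _).symm⟩
  have hhmem : ∀ x : V, hh x ∈ doubleCoset K (hh x) :=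
    fun x => ⟨1, K.one_mem, 1, K.one_mem, by group⟩
  have hexists : ∀ (x : V) (y : H), y ∈ doubleCoset K (hh x) →
      ∃ j, ∃ s ∈ K, y = r x j * s := by
    intro x y hy
    rw [hrU x] at hy
    obtain ⟨j, s, hs, he⟩ := Set.mem_iUnion.1 hy
    exact ⟨j, s, hs, he⟩
  have hnpos : ∀ x : V, 0 < nn x := by
    intro x
    obtain ⟨j, -⟩ := hexists x (hh x) (hhmem x)
    exact Nat.pos_of_ne_zero (fun h => by rw [h] at j; exact j.elim0)
  have huniq : ∀ (x : V) (j j' : Fin (nn x)) (s s' : H), s ∈ K → s' ∈ K →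
      r x j * s = r x j' * s' → j = j' := by
    intro x j j' s s' hs hs' he
    by_contra hne
    have hd := hrD x j j' hne
    exact (Set.disjoint_left.1 hd ⟨s, hs, rfl⟩) ⟨s', hs', he⟩
  set ind : (x : V) → H → Fin (nn x) := fun x y =>
    if hy : y ∈ doubleCoset K (hh x) then (hexists x y hy).choose
    else ⟨0, hnpos x⟩ with hind_def
  have hind : ∀ (x : V) (y : H), y ∈ doubleCoset K (hh x) →
      ∃ s ∈ K, y = r x (ind x y) * s := by
    intro x y hy
    rw [hind_def]
    simp only [dif_pos hy]
    exact (hexists x y hy).choose_spec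
  have hind_eq : ∀ (x : V) (j : Fin (nn x)) (s : H), s ∈ K → ind x (r x j * s) = j := by
    intro x j s hs
    have hmem : r x j * s ∈ doubleCoset K (hh x) := hdcR s hs x _ (hrmem x j)
    obtain ⟨s', hs', he⟩ := hind x _ hmem
    exact (huniq x _ j s' s hs' hs he.symm)
  
  -- the finite "permutation behavior" of K on the chosen coset representatives
  set ι := {x : V // x ∈ cf.support} with hι
  set c : H → (∀ i : ι, Fin (nn i.1) → Fin (nn i.1)) :=
    fun k i j => ind i.1 (k * r i.1 j) with hc
  have hc_spec : ∀ (k : H), k ∈ K → ∀ (i : ι) (j : Fin (nn i.1)),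
      ∃ s ∈ K, k * r i.1 j = r i.1 (c k i j) * s := by
    intro k hk i j
    exact hind i.1 _ (hdcL k hk i.1 _ (hrmem i.1 j))
  have hc_one : ∀ (i : ι) (j : Fin (nn i.1)), c 1 i j = j := by
    intro i j
    show ind i.1 (1 * r i.1 j) = j
    have := hind_eq i.1 j 1 K.one_mem
    rwa [mul_one, ← one_mul (r i.1 j)] at this
  have hc_mul : ∀ (k k' : H), k ∈ K → k' ∈ K → ∀ (i : ι) (j : Fin (nn i.1)),
      c (k * k') i j = c k i (c k' i j) := by
    intro k k' hk hk' i j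
    obtain ⟨s, hs, he⟩ := hc_spec k' hk' i j
    obtain ⟨s', hs', he'⟩ := hc_spec k hk i (c k' i j)
    show ind i.1 (k * k' * r i.1 j) = _
    have heq : k * k' * r i.1 j = r i.1 (c k i (c k' i j)) * (s' * s) := by
      rw [mul_assoc k k', he, ← mul_assoc, he', mul_assoc]
    rw [heq, hind_eq i.1 _ _ (K.mul_mem hs' hs)]
  have hc_inj : ∀ (k : H), k ∈ K → ∀ i : ι, Function.Injective (c k i) := by
    intro k hk i j j' he
    obtain ⟨s, hs, h1⟩ := hc_spec k hk i j
    obtain ⟨s', hs', h2⟩ := hc_spec k hk i j'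
    rw [he] at h1
    have heq : r i.1 j' * 1 = r i.1 j * (s⁻¹ * s') := by
      have hk2 : r i.1 j' = k⁻¹ * (r i.1 (c k i j') * s') := by
        rw [← h2]; group
      have hR : r i.1 (c k i j') = k * r i.1 j * s⁻¹ :=
        eq_mul_inv_iff_mul_eq.2 h1.symm
      rw [mul_one, hk2, hR]; group
    exact (huniq i.1 j' j 1 (s⁻¹ * s') K.one_mem
      (K.mul_mem (K.inv_mem hs) hs') heq).symm
  have htrans : ∀ (i : ι) (j j' : Fin (nn i.1)), ∃ k ∈ K, c k i j = j' := by
    intro i j j'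
    obtain ⟨k₁, hk₁, k₂, hk₂, he⟩ := hrmem i.1 j
    obtain ⟨k₁', hk₁', k₂', hk₂', he'⟩ := hrmem i.1 j'
    refine ⟨k₁' * k₁⁻¹, K.mul_mem hk₁' (K.inv_mem hk₁), ?_⟩
    show ind i.1 _ = j'
    have heq : (k₁' * k₁⁻¹) * r i.1 j = r i.1 j' * (k₂'⁻¹ * k₂) := by
      rw [he, he']; group
    rw [heq, hind_eq i.1 j' _ (K.mul_mem (K.inv_mem hk₂') hk₂)]
  set Tset : Set (∀ i : ι, Fin (nn i.1) → Fin (nn i.1)) := {g | ∃ k ∈ K, c k = g} with hTset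
  set T : Finset (∀ i : ι, Fin (nn i.1) → Fin (nn i.1)) := (Set.toFinite Tset).toFinset with hT
  have hmemT : ∀ g, g ∈ T ↔ g ∈ Tset := fun g => Set.Finite.mem_toFinset _
  set kk : (∀ i : ι, Fin (nn i.1) → Fin (nn i.1)) → H :=
    fun g => if hg : g ∈ Tset then hg.choose else 1 with hkk_def
  have hkk : ∀ g ∈ Tset, kk g ∈ K ∧ c (kk g) = g := by
    intro g hg
    have hkkg : kk g = hg.choose := by rw [hkk_def]; simp only [dif_pos hg]
    rw [hkkg]
    exact hg.choose_spec
  set j₀ : (i : ι) → Fin (nn i.1) := fun i => ind i.1 (hh i.1) with hj₀def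
  have hj₀ : ∀ i : ι, ∃ s ∈ K, hh i.1 = r i.1 (j₀ i) * s := fun i => hind i.1 (hh i.1) (hhmem i.1)
  have key : ∀ (k : H), k ∈ K → ∀ i : ι,
      σ k (i.1) = aa i.1 (σ (r i.1 (c k i (j₀ i))) Φ) := by
    intro k hk i
    obtain ⟨s, hs, hs_eq⟩ := hj₀ i
    obtain ⟨s', hs', he'⟩ := hc_spec k hk i (j₀ i)
    have h1 : i.1 = aa i.1 (σ (hh i.1) Φ) := hxa i.1 i.2
    rw [show σ k i.1 = σ k (aa i.1 (σ (hh i.1) Φ)) by rw [← h1]]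
    rw [hAcomm _ (haA i.1 i.2), ← hσmul]
    congr 1
    have heq : k * hh i.1 = r i.1 (c k i (j₀ i)) * (s' * s) := by
      rw [hs_eq, ← mul_assoc, he', mul_assoc]
    rw [heq, hσfixr _ _ (K.mul_mem hs' hs)]
  have hfle : ∀ (i : ι) (j j' : Fin (nn i.1)),
      (T.filter fun g => g i (j₀ i) = j).card ≤ (T.filter fun g => g i (j₀ i) = j').card := by
    intro i j j'
    obtain ⟨k, hk, hck⟩ := htrans i j j'
    apply Finset.card_le_card_of_injOn (fun g => fun i' j'' => c k i' (g i' j''))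
    · intro g hg
      rw [Finset.mem_coe, Finset.mem_filter] at hg ⊢
      obtain ⟨hgT, hgv⟩ := hg
      obtain ⟨kg, hkg, hckg⟩ := (hmemT g).1 hgT
      constructor
      · rw [hmemT]
        refine ⟨k * kg, K.mul_mem hk hkg, ?_⟩
        funext i' j''
        rw [hc_mul k kg hk hkg i' j'', hckg]
      · show c k i (g i (j₀ i)) = j'
        rw [hgv, hck]
    · intro g₁ _ g₂ _ he
      funext i' j''
      exact hc_inj k hk i' (congrFun (congrFun he i') j'')
  have hfib : ∀ (i : ι) (j : Fin (nn i.1)),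
      (T.filter fun g => g i (j₀ i) = j).card = (T.filter fun g => g i (j₀ i) = j₀ i).card :=
    fun i j => le_antisymm (hfle i j (j₀ i)) (hfle i (j₀ i) j)
  set m : ι → ℕ := fun i => (T.filter fun g => g i (j₀ i) = j₀ i).card with hm
  have hinner : ∀ i : ι,
      (∑ g ∈ T, σ (r i.1 (g i (j₀ i))) Φ) = (m i) • (cc i.1 • Φ) := by
    intro i
    rw [← Finset.sum_fiberwise T (fun g => g i (j₀ i)) (fun g => σ (r i.1 (g i (j₀ i))) Φ)]
    have hstep : ∀ j : Fin (nn i.1),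
        (∑ g ∈ T.filter (fun g => g i (j₀ i) = j), σ (r i.1 (g i (j₀ i))) Φ)
          = (m i) • σ (r i.1 j) Φ := by
      intro j
      calc (∑ g ∈ T.filter (fun g => g i (j₀ i) = j), σ (r i.1 (g i (j₀ i))) Φ)
          = ∑ _g ∈ T.filter (fun g => g i (j₀ i) = j), σ (r i.1 j) Φ :=
            Finset.sum_congr rfl (fun g hg => by rw [(Finset.mem_filter.1 hg).2])
        _ = (T.filter (fun g => g i (j₀ i) = j)).card • σ (r i.1 j) Φ := Finset.sum_const _
        _ = (m i) • σ (r i.1 j) Φ := by rw [hfib i j, hm]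
    rw [Finset.sum_congr rfl (fun j _ => hstep j), ← Finset.smul_sum, hcc i.1]
  have hT1 : (c 1) ∈ T := (hmemT _).2 ⟨1, K.one_mem, rfl⟩
  have hTcard : T.card ≠ 0 := Finset.card_ne_zero_of_mem hT1
  have hvsum : v = ∑ i : ι, cf i.1 • (i.1 : V) := by
    rw [← hsumv, Finsupp.sum]
    exact (Finset.sum_coe_sort cf.support (fun x => cf x • x)).symm
  have hbig : T.card • v ∈ M := by
    have h2 : ∀ g ∈ T, v = ∑ i : ι, cf i.1 • (aa i.1 (σ (r i.1 (g i (j₀ i))) Φ)) := by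
      intro g hg
      obtain ⟨hkkK, hkkc⟩ := hkk g ((hmemT g).1 hg)
      calc v = σ (kk g) v := (hv _ hkkK).symm
        _ = σ (kk g) (∑ i : ι, cf i.1 • (i.1 : V)) := by rw [← hvsum]
        _ = ∑ i : ι, cf i.1 • σ (kk g) i.1 := by
            rw [map_sum]
            exact Finset.sum_congr rfl fun i _ => map_smul _ _ _
        _ = ∑ i : ι, cf i.1 • (aa i.1 (σ (r i.1 (g i (j₀ i))) Φ)) := by
            refine Finset.sum_congr rfl fun i _ => ?_
            rw [key (kk g) hkkK i, hkkc]
    have h3 : T.card • v = ∑ i : ι, cf i.1 • (aa i.1 ((m i) • (cc i.1 • Φ))) := by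
      calc T.card • v = ∑ _g ∈ T, v := (Finset.sum_const v).symm
        _ = ∑ g ∈ T, ∑ i : ι, cf i.1 • (aa i.1 (σ (r i.1 (g i (j₀ i))) Φ)) :=
            Finset.sum_congr rfl h2
        _ = ∑ i : ι, ∑ g ∈ T, cf i.1 • (aa i.1 (σ (r i.1 (g i (j₀ i))) Φ)) :=
            Finset.sum_comm
        _ = ∑ i : ι, cf i.1 • (aa i.1 (∑ g ∈ T, σ (r i.1 (g i (j₀ i))) Φ)) := by
            refine Finset.sum_congr rfl fun i _ => ?_
            rw [map_sum, Finset.smul_sum]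
        _ = ∑ i : ι, cf i.1 • (aa i.1 ((m i) • (cc i.1 • Φ))) := by
            refine Finset.sum_congr rfl fun i _ => ?_
            rw [hinner i]
    rw [h3]
    refine Submodule.sum_mem M fun i _ => Submodule.smul_mem M _ ?_
    refine hAM (aa i.1) (haA i.1 i.2) _ ?_
    exact nsmul_mem (Submodule.smul_mem M _ hΦM) _
  have hbig' : ((T.card : ℂ)) • v ∈ M := by
    rw [Nat.cast_smul_eq_nsmul]; exact hbig
  have hfin := M.smul_mem ((T.card : ℂ))⁻¹ hbig'
  rwa [smul_smul, inv_mul_cancel₀ (by exact_mod_cast hTcard), one_smul] at hfin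
end

section
/- Let V be a complex vector space equipped with a 𝔤-module structure for a Lie algebra 𝔤 over ℂ, a ℂ-linear action of a group K∞, and a ℂ-linear action of a group H, such that the H-action commutes with the 𝔤-action and with the K∞-action. Call a subspace of V invariant if it is stable under the actions of 𝔤, K∞ and H, and assume every invariant subspace of V has an invariant complement. Let K be a subgroup of H such that for every h ∈ H the double coset KhK is a finite disjoint union of left cosets of K. Let Φ ∈ V be a nonzero vector such that: (i) the smallest subspace M of V containing Φ and stable under 𝔤 and K∞ is irreducible under the joint action of 𝔤 and K∞, i.e., M has no subspaces stable under both 𝔤 and K∞ other than 0 and M; (ii) Φ is fixed by every element of K, and for every h ∈ H, writing KhK as a disjoint union of left cosets h₁K, …, h_nK, the vector Σ_{i=1}^n h_i·Φ is a scalar multiple of Φ; (iii) V equals the smallest subspace of V containing Φ that is stable under the actions of 𝔤, K∞ and H. Then V has no invariant subspaces other than 0 and V. -/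
section Helpers

variable {H : Type*} [Group H]

lemma mem_doubleCoset_self (K : Subgroup H) (h : H) : h ∈ doubleCoset K h :=
  ⟨1, K.one_mem, 1, K.one_mem, by group⟩

lemma doubleCoset_mul_left {K : Subgroup H} {h x : H} (k : H) (hk : k ∈ K)
    (hx : x ∈ doubleCoset K h) : k * x ∈ doubleCoset K h := by
  obtain ⟨k₁, h₁, k₂, h₂, rfl⟩ := hx
  exact ⟨k * k₁, K.mul_mem hk h₁, k₂, h₂, by group⟩

lemma leftTranslate_mem_doubleCoset {K : Subgroup H} {h : H} {n : ℕ} {r : Fin n → H}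
    (hdecomp : doubleCoset K h = ⋃ i, leftTranslate (r i) (K : Set H)) (i : Fin n) :
    r i ∈ doubleCoset K h := by
  rw [hdecomp]
  exact Set.mem_iUnion.2 ⟨i, 1, K.one_mem, (mul_one _).symm⟩

variable {V : Type*} [AddCommGroup V] [Module ℂ V]

lemma span_stable_of_gen {f : V →ₗ[ℂ] V} {S : Set V}
    (h : ∀ s ∈ S, f s ∈ Submodule.span ℂ S) :
    ∀ v ∈ Submodule.span ℂ S, f v ∈ Submodule.span ℂ S := by
  intro v hv
  have h2 : Submodule.map f (Submodule.span ℂ S) ≤ Submodule.span ℂ S := by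
    rw [Submodule.map_span, Submodule.span_le]
    rintro y ⟨s, hs, rfl⟩
    exact h s hs
  exact h2 ⟨v, hv, rfl⟩

lemma avg_mem (σ : H →* (V ≃ₗ[ℂ] V)) (K : Subgroup H) (M : Submodule ℂ V)
    (n : H → ℕ) (r : ∀ h : H, Fin (n h) → H) (c : H → ℂ)
    (hdecomp : ∀ h, doubleCoset K h = ⋃ i, leftTranslate (r h i) (K : Set H))
    (hdisj : ∀ (h : H), ∀ i j : Fin (n h), i ≠ j →
      Disjoint (leftTranslate (r h i) (K : Set H)) (leftTranslate (r h j) (K : Set H)))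
    (hKfix : ∀ m ∈ M, ∀ k ∈ K, σ k m = m)
    (heig : ∀ (h : H), ∀ m ∈ M, ∑ i, σ (r h i) m = c h • m)
    (v : V) (hv : ∀ k ∈ K, σ k v = v)
    (hvspan : v ∈ Submodule.span ℂ {w | ∃ (h : H), ∃ m ∈ M, w = σ h m}) :
    v ∈ M := by
  classical
  have σmul : ∀ (a b : H) (w : V), σ (a * b) w = σ a (σ b w) := fun a b w => by
    rw [map_mul]; rfl
  obtain ⟨N, f, g, hgsum⟩ := Submodule.mem_span_set'.1 hvspan
  choose hh mm hmm hgg using fun j : Fin N => (g j).2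
  -- the finite index set
  let I : Type _ := (j : Fin N) × Fin (n (hh j))
  let R : I → H := fun x => r (hh x.1) x.2
  have hex : ∀ (x : I) (k : H), k ∈ K → ∃ i : Fin (n (hh x.1)),
      k * R x ∈ leftTranslate (r (hh x.1) i) (K : Set H) := by
    intro x k hk
    have h1 : R x ∈ doubleCoset K (hh x.1) := leftTranslate_mem_doubleCoset (hdecomp _) x.2
    have h2 : k * R x ∈ doubleCoset K (hh x.1) := doubleCoset_mul_left k hk h1
    rw [hdecomp] at h2
    exact Set.mem_iUnion.1 h2
  have huniq : ∀ (h : H) (x : H) (i i' : Fin (n h)),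
      x ∈ leftTranslate (r h i) (K : Set H) → x ∈ leftTranslate (r h i') (K : Set H) →
      i = i' := by
    intro h x i i' h1 h2
    by_contra hne
    exact Set.disjoint_left.1 (hdisj h i i' hne) h1 h2
  let act2 : (k : H) → k ∈ K → (x : I) → Fin (n (hh x.1)) := fun k hk x => (hex x k hk).choose
  have act2_spec : ∀ (k : H) (hk : k ∈ K) (x : I),
      k * R x ∈ leftTranslate (r (hh x.1) (act2 k hk x)) (K : Set H) :=
    fun k hk x => (hex x k hk).choose_spec
  have act2_eq : ∀ (k : H) (hk : k ∈ K) (x : I) (i' : Fin (n (hh x.1))),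
      k * R x ∈ leftTranslate (r (hh x.1) i') (K : Set H) → act2 k hk x = i' :=
    fun k hk x i' hmem => huniq _ _ _ _ (act2_spec k hk x) hmem
  have act2_mul : ∀ (k k' : H) (hk : k ∈ K) (hk' : k' ∈ K) (x : I),
      act2 (k * k') (K.mul_mem hk hk') x = act2 k hk ⟨x.1, act2 k' hk' x⟩ := by
    intro k k' hk hk' x
    refine act2_eq _ (K.mul_mem hk hk') _ _ ?_
    obtain ⟨s₁, hs₁, he₁⟩ := act2_spec k' hk' x
    obtain ⟨s₂, hs₂, he₂⟩ := act2_spec k hk ⟨x.1, act2 k' hk' x⟩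
    refine ⟨s₂ * s₁, K.mul_mem hs₂ hs₁, ?_⟩
    have hstep : k * (r (hh x.1) (act2 k' hk' x))
        = r (hh x.1) (act2 k hk ⟨x.1, act2 k' hk' x⟩) * s₂ := he₂
    calc k * k' * (r (hh x.1) x.2) = k * (k' * r (hh x.1) x.2) := by group
    _ = k * (r (hh x.1) (act2 k' hk' x) * s₁) := by rw [he₁]
    _ = (k * r (hh x.1) (act2 k' hk' x)) * s₁ := by group
    _ = (r (hh x.1) (act2 k hk ⟨x.1, act2 k' hk' x⟩) * s₂) * s₁ := by rw [hstep]
    _ = r (hh x.1) (act2 k hk ⟨x.1, act2 k' hk' x⟩) * (s₂ * s₁) := by group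
  have act2_cancel : ∀ (k₁ k₂ : H) (hk₁ : k₁ ∈ K) (hk₂ : k₂ ∈ K) (_ : k₁ * k₂ = 1) (x : I),
      act2 k₁ hk₁ ⟨x.1, act2 k₂ hk₂ x⟩ = x.2 := by
    intro k₁ k₂ hk₁ hk₂ hc x
    refine act2_eq _ hk₁ _ _ ?_
    obtain ⟨s₁, hs₁, he₁⟩ := act2_spec k₂ hk₂ x
    refine ⟨s₁⁻¹, K.inv_mem hs₁, ?_⟩
    show k₁ * (r (hh x.1) (act2 k₂ hk₂ x)) = r (hh x.1) x.2 * s₁⁻¹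
    have h2 : r (hh x.1) (act2 k₂ hk₂ x) = k₂ * r (hh x.1) x.2 * s₁⁻¹ := by
      rw [he₁]; group
    rw [h2, ← mul_assoc, ← mul_assoc, hc, one_mul]
  -- the permutations
  let ψ : ↥K → Equiv.Perm I := fun k =>
    { toFun := fun x => ⟨x.1, act2 (k : H) k.2 x⟩
      invFun := fun x => ⟨x.1, act2 ((k : H))⁻¹ (K.inv_mem k.2) x⟩
      left_inv := by
        intro x
        have h1 : ((k : H))⁻¹ * (k : H) = 1 := inv_mul_cancel _
        have h2 := act2_cancel ((k:H))⁻¹ (k:H) (K.inv_mem k.2) k.2 h1 x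
        show (⟨x.1, act2 ((k:H))⁻¹ (K.inv_mem k.2) ⟨x.1, act2 (k:H) k.2 x⟩⟩ : I) = x
        exact (congrArg (Sigma.mk x.1) h2).trans (Sigma.eta x)
      right_inv := by
        intro x
        have h1 : (k : H) * ((k : H))⁻¹ = 1 := mul_inv_cancel _
        have h2 := act2_cancel (k:H) ((k:H))⁻¹ k.2 (K.inv_mem k.2) h1 x
        show (⟨x.1, act2 (k:H) k.2 ⟨x.1, act2 ((k:H))⁻¹ (K.inv_mem k.2) x⟩⟩ : I) = x
        exact (congrArg (Sigma.mk x.1) h2).trans (Sigma.eta x) }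
  have ψ_apply : ∀ (k : ↥K) (x : I), ψ k x = ⟨x.1, act2 (k : H) k.2 x⟩ := fun k x => rfl
  have ψ_mul : ∀ k k' : ↥K, ψ (k * k') = ψ k * ψ k' := by
    intro k k'
    refine Equiv.ext fun x => ?_
    show (⟨x.1, act2 ((k : H) * (k' : H)) (k * k').2 x⟩ : I)
      = ⟨x.1, act2 (k : H) k.2 ⟨x.1, act2 (k' : H) k'.2 x⟩⟩
    have h2 : act2 ((k : H) * (k' : H)) (k * k').2 x
        = act2 (k : H) k.2 ⟨x.1, act2 (k' : H) k'.2 x⟩ := act2_mul (k : H) (k' : H) k.2 k'.2 x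
    exact congrArg (Sigma.mk x.1) h2
  have ψ_one : ψ 1 = 1 := by
    refine Equiv.ext fun x => ?_
    show (⟨x.1, act2 ((1 : ↥K) : H) (1 : ↥K).2 x⟩ : I) = x
    have h2 : act2 ((1 : ↥K) : H) (1 : ↥K).2 x = x.2 := by
      refine act2_eq _ (1 : ↥K).2 _ _ ?_
      refine ⟨1, K.one_mem, ?_⟩
      show ((1 : ↥K) : H) * r (hh x.1) x.2 = r (hh x.1) x.2 * 1
      rw [OneMemClass.coe_one, one_mul, mul_one]
    exact (congrArg (Sigma.mk x.1) h2).trans (Sigma.eta x)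
  have ψ_inv : ∀ k : ↥K, ψ k⁻¹ = (ψ k)⁻¹ := by
    intro k
    have h1 : ψ k⁻¹ * ψ k = 1 := by rw [← ψ_mul, inv_mul_cancel, ψ_one]
    exact eq_inv_of_mul_eq_one_left h1
  -- the finite group as a finset
  let Q : Finset (Equiv.Perm I) := Finset.univ.filter (fun e => ∃ k : ↥K, ψ k = e)
  have hQmem : ∀ e : Equiv.Perm I, e ∈ Q ↔ ∃ k : ↥K, ψ k = e := by
    intro e
    simp only [Q, Finset.mem_filter, Finset.mem_univ, true_and]
  have hQone : (1 : Equiv.Perm I) ∈ Q := (hQmem 1).2 ⟨1, ψ_one⟩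
  -- a section of ψ over Q
  let sec : Equiv.Perm I → ↥K := fun e =>
    if h : ∃ k : ↥K, ψ k = e then h.choose else 1
  have hsec : ∀ e ∈ Q, ψ (sec e) = e := by
    intro e he
    have h := (hQmem e).1 he
    show ψ (if h : ∃ k : ↥K, ψ k = e then h.choose else 1) = e
    rw [dif_pos h]
    exact h.choose_spec
  -- key computation for each j
  have key : ∀ j : Fin N, ∑ e ∈ Q, σ ((sec e : H) * hh j) (mm j) ∈ M := by
    intro j
    have hj0 : hh j ∈ doubleCoset K (hh j) := mem_doubleCoset_self K (hh j)
    rw [hdecomp] at hj0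
    obtain ⟨i₀, κ₀, hκ₀, hhj⟩ := Set.mem_iUnion.1 hj0
    set x₀ : I := (⟨j, i₀⟩ : I) with hx₀def
    have hA : ∀ e ∈ Q, σ ((sec e : H) * hh j) (mm j) = σ (R (e x₀)) (mm j) := by
      intro e he
      obtain ⟨s₂, hs₂, he₂⟩ := act2_spec (sec e : H) (sec e).2 x₀
      have he₂' : (sec e : H) * r (hh j) i₀
          = r (hh j) (act2 (sec e : H) (sec e).2 x₀) * s₂ := he₂
      have hx : (sec e : H) * hh j
          = r (hh j) (act2 (sec e : H) (sec e).2 x₀) * (s₂ * κ₀) := by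
        calc (sec e : H) * hh j = (sec e : H) * (r (hh j) i₀ * κ₀) := by rw [← hhj]
        _ = ((sec e : H) * r (hh j) i₀) * κ₀ := by group
        _ = (r (hh j) (act2 (sec e : H) (sec e).2 x₀) * s₂) * κ₀ := by rw [he₂']
        _ = r (hh j) (act2 (sec e : H) (sec e).2 x₀) * (s₂ * κ₀) := by group
      rw [hx, σmul, hKfix (mm j) (hmm j) (s₂ * κ₀) (K.mul_mem hs₂ hκ₀)]
      have hexq : e x₀ = (⟨j, act2 (sec e : H) (sec e).2 x₀⟩ : I) := by
        conv_lhs => rw [← hsec e he]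
        rfl
      rw [hexq]
    rw [Finset.sum_congr rfl hA]
    have hfib := Finset.sum_fiberwise_of_maps_to (s := Q) (t := (Finset.univ : Finset I))
        (g := fun e => e x₀) (fun e _ => Finset.mem_univ (e x₀))
        (fun e => σ (R (e x₀)) (mm j))
    rw [← hfib]
    have hB : ∀ y : I, ∑ e ∈ Q.filter (fun e => e x₀ = y), σ (R (e x₀)) (mm j)
        = (Q.filter (fun e => e x₀ = y)).card • σ (R y) (mm j) := by
      intro y
      rw [Finset.sum_congr rfl (fun e he => by rw [(Finset.mem_filter.1 he).2])]
      exact Finset.sum_const _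
    rw [Finset.sum_congr rfl (fun y _ => hB y)]
    rw [← Finset.univ_sigma_univ, Finset.sum_sigma]
    refine Submodule.sum_mem M ?_
    intro j' _
    by_cases hj' : j' = j
    · subst hj'
      -- constant fiber cardinality
      have hcardconst : ∀ i : Fin (n (hh j')),
          (Q.filter (fun e => e x₀ = (⟨j', i⟩ : I))).card
          = (Q.filter (fun e => e x₀ = x₀)).card := by
        intro i
        have hri : r (hh j') i ∈ doubleCoset K (hh j') :=
          leftTranslate_mem_doubleCoset (hdecomp _) i
        obtain ⟨k₁, hk₁, k₂, hk₂, hri'⟩ := hri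
        have hact : act2 k₁ hk₁ x₀ = i := by
          refine act2_eq _ hk₁ _ _ ?_
          refine ⟨(κ₀ * k₂)⁻¹, K.inv_mem (K.mul_mem hκ₀ hk₂), ?_⟩
          show k₁ * r (hh j') i₀ = r (hh j') i * (κ₀ * k₂)⁻¹
          rw [hri']
          conv_rhs => rw [hhj]
          group
        have hq₁x₀ : ψ ⟨k₁, hk₁⟩ x₀ = (⟨j', i⟩ : I) := by
          show (⟨x₀.1, act2 k₁ hk₁ x₀⟩ : I) = (⟨j', i⟩ : I)
          exact congrArg (Sigma.mk j') hact
        have hQmul : ∀ (k : ↥K), ∀ e ∈ Q, ψ k * e ∈ Q := by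
          intro k e he
          obtain ⟨k'', rfl⟩ := (hQmem e).1 he
          rw [← ψ_mul]
          exact (hQmem _).2 ⟨_, rfl⟩
        refine Finset.card_bij' (fun e _ => (ψ ⟨k₁, hk₁⟩)⁻¹ * e)
          (fun e _ => ψ ⟨k₁, hk₁⟩ * e) ?_ ?_ ?_ ?_
        · intro e he
          rw [Finset.mem_filter] at he ⊢
          refine ⟨?_, ?_⟩
          · rw [← ψ_inv]
            exact hQmul _ _ he.1
          · rw [Equiv.Perm.mul_apply, he.2, ← hq₁x₀, Equiv.Perm.coe_inv, Equiv.symm_apply_apply]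
        · intro e he
          rw [Finset.mem_filter] at he ⊢
          refine ⟨hQmul _ _ he.1, ?_⟩
          rw [Equiv.Perm.mul_apply, he.2, hq₁x₀]
        · intro e _
          exact mul_inv_cancel_left _ _
        · intro e _
          exact inv_mul_cancel_left _ _
      have hsum : ∑ i : Fin (n (hh j')),
            (Q.filter (fun e => e x₀ = (⟨j', i⟩ : I))).card • σ (R ⟨j', i⟩) (mm j')
          = (Q.filter (fun e => e x₀ = x₀)).card • (c (hh j') • mm j') :=
        calc ∑ i : Fin (n (hh j')),
            (Q.filter (fun e => e x₀ = (⟨j', i⟩ : I))).card • σ (R ⟨j', i⟩) (mm j')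
            = ∑ i : Fin (n (hh j')),
              (Q.filter (fun e => e x₀ = x₀)).card • σ (r (hh j') i) (mm j') := by
              refine Finset.sum_congr rfl fun i _ => ?_
              rw [hcardconst i]
          _ = (Q.filter (fun e => e x₀ = x₀)).card • ∑ i, σ (r (hh j') i) (mm j') := by
              rw [Finset.smul_sum]
          _ = (Q.filter (fun e => e x₀ = x₀)).card • (c (hh j') • mm j') := by
              rw [heig (hh j') (mm j') (hmm j')]
      rw [hsum]
      exact Submodule.smul_of_tower_mem M _ (Submodule.smul_mem M _ (hmm j'))
    · -- j' ≠ j : all fibers are empty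
      have hzero : ∀ i : Fin (n (hh j')),
          (Q.filter (fun e => e x₀ = (⟨j', i⟩ : I))).card = 0 := by
        intro i
        rw [Finset.card_eq_zero, Finset.filter_eq_empty_iff]
        intro e he
        obtain ⟨k'', rfl⟩ := (hQmem e).1 he
        intro hcontra
        exact hj' (congrArg Sigma.fst hcontra).symm
      rw [Finset.sum_congr rfl (fun i _ => by rw [hzero i, zero_smul])]
      rw [Finset.sum_const, smul_zero]
      exact Submodule.zero_mem M
  -- global assembly
  have h1 : ∑ e ∈ Q, σ (sec e : H) v = (Q.card : ℕ) • v := by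
    rw [Finset.sum_congr rfl (fun e _ => hv (sec e : H) (sec e).2)]
    exact Finset.sum_const v
  have h2 : ∑ e ∈ Q, σ (sec e : H) v ∈ M := by
    have heq : ∑ e ∈ Q, σ (sec e : H) v
        = ∑ j, f j • ∑ e ∈ Q, σ ((sec e : H) * hh j) (mm j) := by
      calc ∑ e ∈ Q, σ (sec e : H) v
          = ∑ e ∈ Q, ∑ j, f j • σ ((sec e : H) * hh j) (mm j) := by
            refine Finset.sum_congr rfl fun e _ => ?_
            rw [← hgsum, map_sum]
            refine Finset.sum_congr rfl fun j _ => ?_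
            rw [map_smul, hgg j, ← σmul]
        _ = ∑ j, ∑ e ∈ Q, f j • σ ((sec e : H) * hh j) (mm j) := Finset.sum_comm
        _ = ∑ j, f j • ∑ e ∈ Q, σ ((sec e : H) * hh j) (mm j) := by
            refine Finset.sum_congr rfl fun j _ => ?_
            rw [Finset.smul_sum]
    rw [heq]
    exact Submodule.sum_mem M fun j _ => Submodule.smul_mem M (f j) (key j)
  rw [h1] at h2
  have hcard : ((Q.card : ℂ)) ≠ 0 := by
    simp only [ne_eq, Nat.cast_eq_zero, Finset.card_eq_zero]
    intro hQ
    rw [hQ] at hQone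
    exact absurd hQone (Finset.notMem_empty _)
  have : v = (Q.card : ℂ)⁻¹ • ((Q.card : ℂ) • v) := by
    rw [smul_smul, inv_mul_cancel₀ hcard, one_smul]
  rw [this]
  refine Submodule.smul_mem M _ ?_
  rw [Nat.cast_smul_eq_nsmul ℂ]
  exact h2

end Helpers

/-- Algebraic form of the main global theorem.  Let `V` be a complex vector space with a
`𝔤`-module structure (`𝔤` a complex Lie algebra), a ℂ-linear action of a group `K∞` and
a ℂ-linear action of a group `H` commuting with both; invariant subspaces (stable under
`𝔤`, `K∞` and `H`) are assumed complemented.  `K ≤ H` is a subgroup with every double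
coset `KhK` a finite disjoint union of left cosets of `K`.  Let `Φ ≠ 0` be such that:
(i) the smallest `(𝔤,K∞)`-stable subspace `M` containing `Φ` is irreducible under the
joint action of `𝔤` and `K∞`; (ii) `Φ` is `K`-fixed and a Hecke eigenvector: for every `h`
and disjoint decomposition `KhK = ⊔ hᵢK`, `∑ᵢ hᵢ·Φ` is a multiple of `Φ`; (iii) `V` is the
smallest subspace containing `Φ` stable under `𝔤`, `K∞` and `H`.  Then `V` has no invariant
subspaces other than `0` and `V`. -/
theorem stmt_10 {𝔤 V Kinf H : Type*} [LieRing 𝔤] [LieAlgebra ℂ 𝔤]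
    [AddCommGroup V] [Module ℂ V] [LieRingModule 𝔤 V] [LieModule ℂ 𝔤 V]
    [Group Kinf] [Group H]
    (ρ : Kinf →* (V ≃ₗ[ℂ] V)) (σ : H →* (V ≃ₗ[ℂ] V))
    -- the `H`-action commutes with the `𝔤`-action and the `K∞`-action:
    (hcomm𝔤 : ∀ (h : H) (X : 𝔤) (v : V), σ h ⁅X, v⁆ = ⁅X, σ h v⁆)
    (hcommK : ∀ (h : H) (κ : Kinf) (v : V), σ h (ρ κ v) = ρ κ (σ h v))
    -- every invariant subspace has an invariant complement:
    (hcompl : ∀ W : Submodule ℂ V,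
      (∀ X : 𝔤, ∀ v ∈ W, ⁅X, v⁆ ∈ W) → (∀ κ : Kinf, ∀ v ∈ W, ρ κ v ∈ W) →
      (∀ h : H, ∀ v ∈ W, σ h v ∈ W) →
      ∃ W' : Submodule ℂ V,
        ((∀ X : 𝔤, ∀ v ∈ W', ⁅X, v⁆ ∈ W') ∧ (∀ κ : Kinf, ∀ v ∈ W', ρ κ v ∈ W') ∧
         (∀ h : H, ∀ v ∈ W', σ h v ∈ W')) ∧
        IsCompl W W')
    (K : Subgroup H)
    (hdec : ∀ h : H, ∃ (n : ℕ) (r : Fin n → H),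
      doubleCoset K h = ⋃ i, leftTranslate (r i) (K : Set H) ∧
      ∀ i j, i ≠ j →
        Disjoint (leftTranslate (r i) (K : Set H)) (leftTranslate (r j) (K : Set H)))
    (Φ : V) (hΦ : Φ ≠ 0)
    -- `M` is the smallest subspace of `V` containing `Φ` stable under `𝔤` and `K∞` ...
    (M : Submodule ℂ V) (hΦM : Φ ∈ M)
    (hM𝔤 : ∀ X : 𝔤, ∀ v ∈ M, ⁅X, v⁆ ∈ M)
    (hMK : ∀ κ : Kinf, ∀ v ∈ M, ρ κ v ∈ M)
    (hMmin : ∀ W : Submodule ℂ V, Φ ∈ W →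
      (∀ X : 𝔤, ∀ v ∈ W, ⁅X, v⁆ ∈ W) → (∀ κ : Kinf, ∀ v ∈ W, ρ κ v ∈ W) → M ≤ W)
    -- (i) ... and `M` is irreducible under the joint action of `𝔤` and `K∞`:
    (hMirr : ∀ W ≤ M, (∀ X : 𝔤, ∀ v ∈ W, ⁅X, v⁆ ∈ W) →
      (∀ κ : Kinf, ∀ v ∈ W, ρ κ v ∈ W) → W = ⊥ ∨ W = M)
    -- (ii) `Φ` is fixed by `K` and is an eigenvector of all Hecke operators:
    (hfix : ∀ k ∈ K, σ k Φ = Φ)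
    (heigen : ∀ (h : H) (n : ℕ) (r : Fin n → H),
      doubleCoset K h = ⋃ i, leftTranslate (r i) (K : Set H) →
      (∀ i j, i ≠ j →
        Disjoint (leftTranslate (r i) (K : Set H)) (leftTranslate (r j) (K : Set H))) →
      ∃ c : ℂ, ∑ i, σ (r i) Φ = c • Φ)
    -- (iii) `V` is generated by `Φ` under the actions of `𝔤`, `K∞` and `H`:
    (hgen : ∀ W : Submodule ℂ V, Φ ∈ W →
      (∀ X : 𝔤, ∀ v ∈ W, ⁅X, v⁆ ∈ W) → (∀ κ : Kinf, ∀ v ∈ W, ρ κ v ∈ W) →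
      (∀ h : H, ∀ v ∈ W, σ h v ∈ W) → W = ⊤) :
    ∀ W : Submodule ℂ V,
      (∀ X : 𝔤, ∀ v ∈ W, ⁅X, v⁆ ∈ W) → (∀ κ : Kinf, ∀ v ∈ W, ρ κ v ∈ W) →
      (∀ h : H, ∀ v ∈ W, σ h v ∈ W) → W = ⊥ ∨ W = ⊤ := by
  classical
  -- choose decompositions and eigenvalues
  choose n r hdec1 hdec2 using hdec
  choose c hc using fun h => heigen h (n h) (r h) (hdec1 h) (hdec2 h)
  -- the Lie action as a linear map
  let lieMap : 𝔤 → V →ₗ[ℂ] V := fun X =>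
    { toFun := fun v => ⁅X, v⁆
      map_add' := fun a b => lie_add X a b
      map_smul' := fun t a => lie_smul t X a }
  have lieMap_apply : ∀ (X : 𝔤) (v : V), lieMap X v = ⁅X, v⁆ := fun _ _ => rfl
  have σmul : ∀ (a b : H) (w : V), σ (a * b) w = σ a (σ b w) := fun a b w => by
    rw [map_mul]; rfl
  -- the eigenspace E
  let E : Submodule ℂ V :=
    { carrier := {v | (∀ k ∈ K, σ k v = v) ∧ ∀ h : H, ∑ i, σ (r h i) v = c h • v}
      add_mem' := by
        rintro a b ⟨ha1, ha2⟩ ⟨hb1, hb2⟩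
        refine ⟨fun k hk => by rw [map_add, ha1 k hk, hb1 k hk], fun h => ?_⟩
        simp only [map_add, Finset.sum_add_distrib, ha2 h, hb2 h, smul_add]
      zero_mem' := by
        refine ⟨fun k hk => map_zero _, fun h => ?_⟩
        simp only [map_zero, Finset.sum_const_zero, smul_zero]
      smul_mem' := by
        rintro t a ⟨ha1, ha2⟩
        refine ⟨fun k hk => by rw [map_smul, ha1 k hk], fun h => ?_⟩
        simp only [map_smul, ← Finset.smul_sum, ha2 h, smul_comm t (c h)] }
  have memE : ∀ v : V, v ∈ E ↔
      ((∀ k ∈ K, σ k v = v) ∧ ∀ h : H, ∑ i, σ (r h i) v = c h • v) := fun v => Iff.rfl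
  have hME : M ≤ E := by
    refine hMmin E ⟨hfix, hc⟩ ?_ ?_
    · rintro X v ⟨hv1, hv2⟩
      refine ⟨fun k hk => by rw [hcomm𝔤 k X v, hv1 k hk], fun h => ?_⟩
      have : ∀ i : Fin (n h), σ (r h i) ⁅X, v⁆ = lieMap X (σ (r h i) v) := fun i =>
        hcomm𝔤 (r h i) X v
      rw [Finset.sum_congr rfl fun i _ => this i, ← map_sum, hv2 h, map_smul]
      rfl
    · rintro κ v ⟨hv1, hv2⟩
      refine ⟨fun k hk => by rw [hcommK k κ v, hv1 k hk], fun h => ?_⟩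
      have : ∀ i : Fin (n h), σ (r h i) (ρ κ v) = ρ κ (σ (r h i) v) := fun i =>
        hcommK (r h i) κ v
      rw [Finset.sum_congr rfl fun i _ => this i, ← map_sum, hv2 h, map_smul]
  -- the generating set
  set S : Set V := {w | ∃ (h : H), ∃ m ∈ M, w = σ h m} with hSdef
  have hSspan : Submodule.span ℂ S = ⊤ := by
    refine hgen _ ?_ ?_ ?_ ?_
    · exact Submodule.subset_span ⟨1, Φ, hΦM, by rw [map_one]; rfl⟩
    · intro X v hv
      refine span_stable_of_gen (f := lieMap X) ?_ v hv
      rintro w ⟨h, m, hm, rfl⟩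
      refine Submodule.subset_span ⟨h, ⁅X, m⁆, hM𝔤 X m hm, ?_⟩
      rw [lieMap_apply, ← hcomm𝔤 h X m]
    · intro κ v hv
      refine span_stable_of_gen (f := (ρ κ : V →ₗ[ℂ] V)) ?_ v hv
      rintro w ⟨h, m, hm, rfl⟩
      refine Submodule.subset_span ⟨h, ρ κ m, hMK κ m hm, ?_⟩
      show ρ κ (σ h m) = σ h (ρ κ m)
      rw [← hcommK h κ m]
    · intro h' v hv
      refine span_stable_of_gen (f := (σ h' : V →ₗ[ℂ] V)) ?_ v hv
      rintro w ⟨h, m, hm, rfl⟩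
      refine Submodule.subset_span ⟨h' * h, m, hm, ?_⟩
      show σ h' (σ h m) = σ (h' * h) m
      rw [σmul]
  -- main argument
  intro W hW𝔤 hWK hWH
  obtain ⟨W', ⟨hW'𝔤, hW'K, hW'H⟩, hWc⟩ := hcompl W hW𝔤 hWK hWH
  let π : V →ₗ[ℂ] V := W.subtype ∘ₗ Submodule.projectionOnto W W' hWc
  have hπmem : ∀ v : V, π v ∈ W := fun v => (Submodule.projectionOnto W W' hWc v).2
  have hπleft : ∀ w ∈ W, π w = w := by
    intro w hw
    show (Submodule.projectionOnto W W' hWc w : V) = w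
    rw [show w = ((⟨w, hw⟩ : W) : V) from rfl, Submodule.projectionOnto_apply_left hWc]
  have hπright : ∀ w ∈ W', π w = 0 := by
    intro w hw
    show (Submodule.projectionOnto W W' hWc w : V) = 0
    rw [Submodule.projectionOnto_apply_of_mem_right hWc hw]
    rfl
  have hπcomm : ∀ (fm : V →ₗ[ℂ] V), (∀ w ∈ W, fm w ∈ W) → (∀ w ∈ W', fm w ∈ W') →
      ∀ v : V, π (fm v) = fm (π v) := by
    intro fm hfW hfW' v
    obtain ⟨w, hw, w', hw', rfl⟩ : ∃ w ∈ W, ∃ w' ∈ W', v = w + w' := by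
      have hv : v ∈ W ⊔ W' := by rw [hWc.sup_eq_top]; trivial
      obtain ⟨w, hw, w', hw', hsum⟩ := Submodule.mem_sup.1 hv
      exact ⟨w, hw, w', hw', hsum.symm⟩
    rw [map_add, map_add, map_add, hπleft w hw, hπright w' hw',
      hπleft (fm w) (hfW w hw), hπright (fm w') (hfW' w' hw'), add_zero, add_zero]
  have hπσ : ∀ (h : H) (v : V), π (σ h v) = σ h (π v) := fun h v =>
    hπcomm (σ h : V →ₗ[ℂ] V) (hWH h) (hW'H h) v
  have hπρ : ∀ (κ : Kinf) (v : V), π (ρ κ v) = ρ κ (π v) := fun κ v =>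
    hπcomm (ρ κ : V →ₗ[ℂ] V) (hWK κ) (hW'K κ) v
  have hπlie : ∀ (X : 𝔤) (v : V), π ⁅X, v⁆ = ⁅X, π v⁆ := fun X v =>
    hπcomm (lieMap X) (hW𝔤 X) (hW'𝔤 X) v
  -- the image of M under π is contained in M
  have hπM : ∀ m ∈ M, π m ∈ M := by
    intro m hm
    refine avg_mem σ K M n r c hdec1 hdec2 (fun m' hm' => ((memE m').1 (hME hm')).1)
      (fun h m' hm' => ((memE m').1 (hME hm')).2 h) (π m) ?_ ?_
    · intro k hk
      rw [← hπσ k m, ((memE m).1 (hME hm)).1 k hk]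
    · rw [← hSdef, hSspan]
      trivial
  -- M.map π is a (𝔤, K∞)-submodule of M
  have hmap_le : Submodule.map π M ≤ M := by
    rintro _ ⟨m, hm, rfl⟩
    exact hπM m hm
  have hmap𝔤 : ∀ X : 𝔤, ∀ v ∈ Submodule.map π M, ⁅X, v⁆ ∈ Submodule.map π M := by
    rintro X _ ⟨m, hm, rfl⟩
    exact ⟨⁅X, m⁆, hM𝔤 X m hm, hπlie X m⟩
  have hmapK : ∀ κ : Kinf, ∀ v ∈ Submodule.map π M, ρ κ v ∈ Submodule.map π M := by
    rintro κ _ ⟨m, hm, rfl⟩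
    exact ⟨ρ κ m, hMK κ m hm, hπρ κ m⟩
  rcases hMirr (Submodule.map π M) hmap_le hmap𝔤 hmapK with hbot | htop
  · -- π vanishes on M, hence on all of V, hence W = ⊥
    left
    have hπzero : ∀ v : V, π v = 0 := by
      intro v
      have hv : v ∈ Submodule.span ℂ S := by rw [hSspan]; trivial
      have hker : Submodule.span ℂ S ≤ LinearMap.ker π := by
        rw [Submodule.span_le]
        rintro _ ⟨h, m, hm, rfl⟩
        have h1 : π m = 0 := by
          have : π m ∈ Submodule.map π M := ⟨m, hm, rfl⟩
          rw [hbot] at this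
          exact this
        show π (σ h m) = 0
        rw [hπσ h m, h1, map_zero]
      exact hker hv
    rw [Submodule.eq_bot_iff]
    intro w hw
    rw [← hπleft w hw]
    exact hπzero w
  · -- Φ ∈ M = map π M ≤ W, hence W = ⊤
    right
    have hΦW : Φ ∈ W := by
      have h1 : Φ ∈ Submodule.map π M := by rw [htop]; exact hΦM
      obtain ⟨m, _, hm2⟩ := h1
      rw [← hm2]
      exact hπmem m
    exact hgen W hΦW hW𝔤 hWK hWH
end
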